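/- Let A^1, ..., A^q partition F_q^{q^{m_1}} into distance-2 MDS codes, each A^k partitioned into q^{m_1} codes A^k_1, ..., A^k_{q^{m_1}} with parameters (q^{m_1}, q^{q^{m_1}-m_1-1}, 3)_q (q ≥ 3), let B be a code with parameters (q^{m_2}, q^{q^{m_2}-m_2-1}, 3)_q, and for each v ∈ B let q_v be a (q^{m_2}-1)-ary quasigroup of order q^{m_1} on the index set {1,...,q^{m_1}}. Then the code C = {(u_1|...|u_{q^{m_2}}) : u_i ∈ A^{v_i}_{j_i}, v ∈ B, j_1 = q_v(j_2,...,j_{q^{m_2}})} has length q^{m_1+m_2}, size q^{q^{m_1+m_2} - (m_1+m_2) - 1}, and minimum distance at least 3. -/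

import Mathlib

/-- The `i`-th length-`q^m₁` block of a word of length `q^(m₁+m₂)`. -/
def block {F : Type*} (q m1 m2 : ℕ) (w : Fin (q ^ (m1 + m2)) → F)
    (i : Fin (q ^ m2)) : Fin (q ^ m1) → F :=
  fun j => w (Fin.cast (by ring) (finProdFinEquiv (i, j)))

/-- `g` is an `n`-ary quasigroup operation: bijective in each argument. -/
def IsQuasigroupOp {S : Type*} {n : ℕ} (g : (Fin n → S) → S) : Prop :=
  ∀ (i : Fin n) (x : Fin n → S), Function.Bijective (fun a => g (Function.update x i a))

def unblock {F : Type*} (q m1 m2 : ℕ) (u : Fin (q ^ m2) → Fin (q ^ m1) → F) :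
    Fin (q ^ (m1 + m2)) → F :=
  fun x => u (finProdFinEquiv.symm (Fin.cast (by ring : q ^ (m1+m2) = q ^ m2 * q ^ m1) x)).1
            (finProdFinEquiv.symm (Fin.cast (by ring : q ^ (m1+m2) = q ^ m2 * q ^ m1) x)).2

theorem block_unblock {F : Type*} (q m1 m2 : ℕ) (u : Fin (q ^ m2) → Fin (q ^ m1) → F) :
    (fun i => block q m1 m2 (unblock q m1 m2 u) i) = u := by
  funext i jc
  simp only [block, unblock, Fin.cast_cast, Fin.cast_refl, id_eq, Equiv.symm_apply_apply]

theorem unblock_block {F : Type*} (q m1 m2 : ℕ) (w : Fin (q ^ (m1 + m2)) → F) :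
    unblock q m1 m2 (fun i => block q m1 m2 w i) = w := by
  funext x
  simp only [unblock, block, Prod.mk.eta, Equiv.apply_symm_apply, Fin.cast_cast, Fin.cast_refl,
    id_eq]

theorem hammingDist_block_sum {F : Type*} [DecidableEq F] (q m1 m2 : ℕ)
    (w w' : Fin (q ^ (m1 + m2)) → F) :
    hammingDist w w' = ∑ i : Fin (q ^ m2),
      hammingDist (block q m1 m2 w i) (block q m1 m2 w' i) := by
  classical
  simp only [hammingDist, Finset.card_filter]
  rw [← Equiv.sum_comp (finProdFinEquiv.trans (finCongr (by ring : q ^ m2 * q ^ m1 = q ^ (m1+m2))))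
        (fun x => if w x ≠ w' x then (1:ℕ) else 0), Fintype.sum_prod_type]
  rfl

/-- extension of a tail by the quasigroup value -/
def Jext {S : Type*} {n2 : ℕ} (Qv : (Fin n2 → S) → S) (j' : Fin n2 → S) : Fin (n2+1) → S :=
  Fin.cases (Qv j') j'

/-- Phelps-type construction of Reed–Muller-like codes of length `q^{m₁+m₂}` and order
`(q-1)(m₁+m₂) - 2` (`q ≥ 3`): the resulting code has `q^{q^{m₁+m₂}-(m₁+m₂)-1}`
codewords and minimum distance at least 3. -/
theorem product_RM_like (q m1 m2 : ℕ) (hq : 3 ≤ q) (hm1 : 1 ≤ m1) (hm2 : 1 ≤ m2)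
    (n2 : ℕ) (hn2 : n2 + 1 = q ^ m2)
    (F : Type*) [Fintype F] [DecidableEq F] (hF : Fintype.card F = q)
    -- A partition of F_q^{q^{m₁}} into distance-2 MDS codes
    (A : F → Set (Fin (q ^ m1) → F))
    (hAdisj : ∀ a b, a ≠ b → Disjoint (A a) (A b))
    (hAcover : (⋃ a, A a) = Set.univ)
    (hAcard : ∀ a, (A a).ncard = q ^ (q ^ m1 - 1))
    (hAdist : ∀ a, ∀ u ∈ A a, ∀ v ∈ A a, u ≠ v → 2 ≤ hammingDist u v)
    -- each A a is partitioned into q^{m₁} codes with parameters (q^{m₁}, q^{q^{m₁}-m₁-1}, 3)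
    (Asub : F → Fin (q ^ m1) → Set (Fin (q ^ m1) → F))
    (hAsubdisj : ∀ a, ∀ j j', j ≠ j' → Disjoint (Asub a j) (Asub a j'))
    (hAsubcover : ∀ a, (⋃ j, Asub a j) = A a)
    (hAsubcard : ∀ a j, (Asub a j).ncard = q ^ (q ^ m1 - m1 - 1))
    (hAsubdist : ∀ a j, ∀ u ∈ Asub a j, ∀ v ∈ Asub a j, u ≠ v → 3 ≤ hammingDist u v)
    (hAsubdist3 : ∀ a j, ∃ u ∈ Asub a j, ∃ v ∈ Asub a j, u ≠ v ∧ hammingDist u v = 3)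
    -- B is a code with parameters (q^{m₂}, q^{q^{m₂}-m₂-1}, 3)
    (B : Set (Fin (q ^ m2) → F))
    (hBcard : B.ncard = q ^ (q ^ m2 - m2 - 1))
    (hBdist : ∀ u ∈ B, ∀ v ∈ B, u ≠ v → 3 ≤ hammingDist u v)
    (hBdist3 : ∃ u ∈ B, ∃ v ∈ B, u ≠ v ∧ hammingDist u v = 3)
    -- for each codeword v of B, a (q^{m₂}-1)-ary quasigroup on the index set
    (Q : (Fin (q ^ m2) → F) → (Fin n2 → Fin (q ^ m1)) → Fin (q ^ m1))
    (hQ : ∀ v ∈ B, IsQuasigroupOp (Q v)) :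
    (({w : Fin (q ^ (m1 + m2)) → F |
        ∃ v ∈ B, ∃ j : Fin (n2 + 1) → Fin (q ^ m1),
          j 0 = Q v (fun t : Fin n2 => j t.succ) ∧
          ∀ i : Fin (n2 + 1),
            block q m1 m2 w (Fin.cast hn2 i) ∈ Asub (v (Fin.cast hn2 i)) (j i)}).ncard
        = q ^ (q ^ (m1 + m2) - (m1 + m2) - 1)) ∧
    (∀ u ∈ {w : Fin (q ^ (m1 + m2)) → F |
        ∃ v ∈ B, ∃ j : Fin (n2 + 1) → Fin (q ^ m1),
          j 0 = Q v (fun t : Fin n2 => j t.succ) ∧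
          ∀ i : Fin (n2 + 1),
            block q m1 m2 w (Fin.cast hn2 i) ∈ Asub (v (Fin.cast hn2 i)) (j i)},
      ∀ u' ∈ {w : Fin (q ^ (m1 + m2)) → F |
        ∃ v ∈ B, ∃ j : Fin (n2 + 1) → Fin (q ^ m1),
          j 0 = Q v (fun t : Fin n2 => j t.succ) ∧
          ∀ i : Fin (n2 + 1),
            block q m1 m2 w (Fin.cast hn2 i) ∈ Asub (v (Fin.cast hn2 i)) (j i)},
        u ≠ u' → 3 ≤ hammingDist u u') := by
  classical
  have hsub : ∀ a jj, Asub a jj ⊆ A a := fun a jj => by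
    rw [← hAsubcover a]; exact Set.subset_iUnion _ jj
  set C : Set (Fin (q ^ (m1 + m2)) → F) := {w : Fin (q ^ (m1 + m2)) → F |
        ∃ v ∈ B, ∃ j : Fin (n2 + 1) → Fin (q ^ m1),
          j 0 = Q v (fun t : Fin n2 => j t.succ) ∧
          ∀ i : Fin (n2 + 1),
            block q m1 m2 w (Fin.cast hn2 i) ∈ Asub (v (Fin.cast hn2 i)) (j i)} with hCdef
  -- uniqueness of witnesses
  have key : ∀ (w : Fin (q^(m1+m2)) → F) (v : Fin (q^m2) → F) (j : Fin (n2+1) → Fin (q^m1)),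
      (∀ i, block q m1 m2 w (Fin.cast hn2 i) ∈ Asub (v (Fin.cast hn2 i)) (j i)) →
      ∀ (v' : Fin (q^m2) → F) (j' : Fin (n2+1) → Fin (q^m1)),
      (∀ i, block q m1 m2 w (Fin.cast hn2 i) ∈ Asub (v' (Fin.cast hn2 i)) (j' i)) →
      v = v' ∧ j = j' := by
    intro w v j h v' j' h'
    have hv : v = v' := by
      funext x
      have h1 : block q m1 m2 w x ∈ Asub (v x) (j (Fin.cast hn2.symm x)) := h (Fin.cast hn2.symm x)
      have h2 : block q m1 m2 w x ∈ Asub (v' x) (j' (Fin.cast hn2.symm x)) :=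
        h' (Fin.cast hn2.symm x)
      by_contra hne
      exact Set.disjoint_left.mp (hAdisj _ _ hne) (hsub _ _ h1) (hsub _ _ h2)
    subst hv
    refine ⟨rfl, funext fun i => ?_⟩
    by_contra hne
    exact Set.disjoint_left.mp (hAsubdisj _ _ _ hne) (h i) (h' i)
  constructor
  · -- cardinality
    have hsubB : ∀ (v : Fin (q^m2) → F), v ∈ B → ∀ (j' : Fin n2 → Fin (q^m1))
        (uu : ∀ _i : Fin (n2+1), Fin (q^m1) → F),
        (∀ i, uu i ∈ Asub (v (Fin.cast hn2 i)) (Jext (Q v) j' i)) →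
        unblock q m1 m2 (fun x => uu (Fin.cast hn2.symm x)) ∈ C := by
      intro v hv j' uu huu
      refine ⟨v, hv, Jext (Q v) j', ?_, ?_⟩
      · simp [Jext]
      · intro i
        have hb := congrFun (block_unblock q m1 m2 (fun x => uu (Fin.cast hn2.symm x)))
          (Fin.cast hn2 i)
        rw [show block q m1 m2 (unblock q m1 m2 (fun x => uu (Fin.cast hn2.symm x)))
            (Fin.cast hn2 i) = uu i from hb]
        exact huu i
    let T := Σ v : B, Σ j' : Fin n2 → Fin (q^m1), ∀ i : Fin (n2+1),
        ↥(Asub ((v : Fin (q^m2) → F) (Fin.cast hn2 i)) (Jext (Q (v : Fin (q^m2) → F)) j' i))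
    let f : T → ↥C := fun t => ⟨unblock q m1 m2
        (fun x => ((t.2.2 (Fin.cast hn2.symm x)) : Fin (q^m1) → F)),
        hsubB t.1.1 t.1.2 t.2.1 (fun i => (t.2.2 i).1) (fun i => (t.2.2 i).2)⟩
    have hbij : Function.Bijective f := by
      constructor
      · rintro ⟨v1s, j1, u1⟩ ⟨v2s, j2, u2⟩ heq
        have hw : unblock q m1 m2 (fun x => ((u1 (Fin.cast hn2.symm x)) : Fin (q^m1) → F))
            = unblock q m1 m2 (fun x => ((u2 (Fin.cast hn2.symm x)) : Fin (q^m1) → F)) :=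
          congrArg Subtype.val heq
        have hg : (fun x => ((u1 (Fin.cast hn2.symm x)) : Fin (q^m1) → F))
            = fun x => ((u2 (Fin.cast hn2.symm x)) : Fin (q^m1) → F) := by
          rw [← block_unblock q m1 m2 (fun x => ((u1 (Fin.cast hn2.symm x)) : Fin (q^m1) → F)),
              ← block_unblock q m1 m2 (fun x => ((u2 (Fin.cast hn2.symm x)) : Fin (q^m1) → F)), hw]
        have hu : ∀ i : Fin (n2+1), ((u1 i) : Fin (q^m1) → F) = u2 i := fun i =>
          congrFun hg (Fin.cast hn2 i)
        have hvs : v1s = v2s := by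
          apply Subtype.ext
          funext x
          by_contra hnev
          have h2 := (u2 (Fin.cast hn2.symm x)).2
          rw [← hu (Fin.cast hn2.symm x)] at h2
          exact Set.disjoint_left.mp (hAdisj _ _ hnev)
            (hsub _ _ (u1 (Fin.cast hn2.symm x)).2) (hsub _ _ h2)
        subst hvs
        have hJ : ∀ i, Jext (Q (v1s : Fin (q^m2) → F)) j1 i
            = Jext (Q (v1s : Fin (q^m2) → F)) j2 i := by
          intro i
          by_contra hnej
          have h2 := (u2 i).2
          rw [← hu i] at h2
          exact Set.disjoint_left.mp (hAsubdisj _ _ _ hnej) (u1 i).2 h2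
        have hj : j1 = j2 := funext fun t => by
          have := hJ t.succ; simpa [Jext] using this
        subst hj
        have huu : u1 = u2 := funext fun i => Subtype.ext (hu i)
        rw [huu]
      · rintro ⟨w, hw⟩
        obtain ⟨v, hv, j, hj0, hmem⟩ := hw
        have hJ : Jext (Q v) (fun t => j t.succ) = j := by
          funext i
          induction i using Fin.cases with
          | zero => simpa [Jext] using hj0.symm
          | succ t => simp [Jext]
        refine ⟨⟨⟨v, hv⟩, fun t => j t.succ, fun i => ⟨block q m1 m2 w (Fin.cast hn2 i), ?_⟩⟩, ?_⟩
        · show block q m1 m2 w (Fin.cast hn2 i) ∈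
            Asub (v (Fin.cast hn2 i)) (Jext (Q v) (fun t => j t.succ) i)
          rw [hJ]
          exact hmem i
        · exact Subtype.ext (unblock_block q m1 m2 w)
    haveI instA : ∀ (a : F) (jj : Fin (q^m1)), Fintype ↥(Asub a jj) :=
      fun _ _ => (Set.toFinite _).fintype
    haveI : Fintype ↥B := (Set.toFinite _).fintype
    have hcard1 : C.ncard = Nat.card T := by
      rw [← Nat.card_coe_set_eq]
      exact (Nat.card_eq_of_bijective f hbij).symm
    have hAc : ∀ (a : F) (jj : Fin (q^m1)), Fintype.card ↥(Asub a jj) = q ^ (q^m1 - m1 - 1) :=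
      fun a jj => by rw [← Nat.card_eq_fintype_card, Nat.card_coe_set_eq, hAsubcard]
    have hBc : Fintype.card ↥B = q ^ (q^m2 - m2 - 1) := by
      rw [← Nat.card_eq_fintype_card, Nat.card_coe_set_eq, hBcard]
    have hcard2 : Nat.card T
        = q ^ (q^m2 - m2 - 1) * ((q^m1) ^ n2 * (q ^ (q^m1 - m1 - 1)) ^ (n2+1)) := by
      rw [Nat.card_eq_fintype_card]
      simp only [T, Fintype.card_sigma, Fintype.card_pi, hAc, Finset.prod_const,
        Finset.card_univ, Finset.sum_const, smul_eq_mul, Fintype.card_fun, Fintype.card_fin, hBc]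
    rw [hcard1, hcard2, ← pow_mul, ← pow_mul, ← pow_add, ← pow_add]
    congr 1
    have ha : m1 + 1 ≤ q ^ m1 := Nat.lt_pow_self (n := m1) (by omega)
    have hb : m2 + 1 ≤ q ^ m2 := Nat.lt_pow_self (n := m2) (by omega)
    have hc : (m1 + m2) + 1 ≤ q ^ (m1+m2) := Nat.lt_pow_self (n := m1+m2) (by omega)
    have hbz : ((q:ℤ))^m2 = (n2:ℤ) + 1 := by exact_mod_cast hn2.symm
    simp only [Nat.sub_sub]
    zify [ha, hb, hc]
    push_cast
    rw [pow_add, hbz]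
    ring
  · -- distance
    have jtwo : ∀ v ∈ B, ∀ (j j' : Fin (n2+1) → Fin (q^m1)),
        j 0 = Q v (fun t => j t.succ) → j' 0 = Q v (fun t => j' t.succ) → j ≠ j' →
        ∃ i1 i2 : Fin (n2+1), i1 ≠ i2 ∧ j i1 ≠ j' i1 ∧ j i2 ≠ j' i2 := by
      intro v hv j j' h0 h0' hnej
      by_cases htail : (fun t : Fin n2 => j t.succ) = fun t => j' t.succ
      · exfalso
        apply hnej
        funext i
        induction i using Fin.cases with
        | zero => rw [h0, h0', htail]
        | succ t => exact congrFun htail t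
      · obtain ⟨s, hs⟩ := Function.ne_iff.mp htail
        by_cases h2 : ∃ s', s' ≠ s ∧ j s'.succ ≠ j' s'.succ
        · obtain ⟨s', hss, hs'⟩ := h2
          exact ⟨s.succ, s'.succ, fun h => hss (Fin.succ_injective _ h).symm, hs, hs'⟩
        · push_neg at h2
          have htailj' : (fun t : Fin n2 => j' t.succ)
              = Function.update (fun t => j t.succ) s (j' s.succ) := by
            funext t
            by_cases hts : t = s
            · subst hts; simp
            · simp only [Function.update, dif_neg hts]
              exact (h2 t hts).symm
          have htailj : (fun t : Fin n2 => j t.succ)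
              = Function.update (fun t => j t.succ) s (j s.succ) :=
            (Function.update_eq_self s _).symm
          have h00 : j 0 ≠ j' 0 := by
            rw [h0, h0', htailj']
            intro hQeq
            apply hs
            apply (hQ v hv s fun t => j t.succ).injective
            show Q v (Function.update (fun t => j t.succ) s (j s.succ)) = _
            rw [Function.update_eq_self]
            exact hQeq
          exact ⟨0, s.succ, (Fin.succ_ne_zero s).symm, h00, hs⟩
    intro u hu u' hu' hneu
    obtain ⟨v, hv, j, hj0, hmem⟩ := hu
    obtain ⟨v', hv', j', hj0', hmem'⟩ := hu'
    rw [hammingDist_block_sum q m1 m2 u u']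
    have fblock : ∀ x : Fin (q^m2), block q m1 m2 u x ∈ Asub (v x) (j (Fin.cast hn2.symm x)) :=
      fun x => hmem (Fin.cast hn2.symm x)
    have fblock' : ∀ x : Fin (q^m2), block q m1 m2 u' x ∈ Asub (v' x) (j' (Fin.cast hn2.symm x)) :=
      fun x => hmem' (Fin.cast hn2.symm x)
    by_cases hvv : v = v'
    · subst hvv
      by_cases hjj : j = j'
      · subst hjj
        have hbne : (fun i => block q m1 m2 u i) ≠ fun i => block q m1 m2 u' i := by
          intro h
          apply hneu
          rw [← unblock_block q m1 m2 u, ← unblock_block q m1 m2 u', h]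
        obtain ⟨x, hx⟩ := Function.ne_iff.mp hbne
        have h3 : 3 ≤ hammingDist (block q m1 m2 u x) (block q m1 m2 u' x) :=
          hAsubdist _ _ _ (fblock x) _ (fblock' x) hx
        calc 3 ≤ hammingDist (block q m1 m2 u x) (block q m1 m2 u' x) := h3
          _ ≤ _ := Finset.single_le_sum
            (f := fun i => hammingDist (block q m1 m2 u i) (block q m1 m2 u' i))
            (fun i _ => Nat.zero_le _) (Finset.mem_univ x)
      · obtain ⟨i1, i2, h12, ha1, ha2⟩ := jtwo v hv j j' hj0 hj0' hjj
        have hx12 : Fin.cast hn2 i1 ≠ Fin.cast hn2 i2 := fun h =>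
          h12 (by have hval := congrArg Fin.val h; exact Fin.ext hval)
        have hd : ∀ i : Fin (n2+1), j i ≠ j' i →
            2 ≤ hammingDist (block q m1 m2 u (Fin.cast hn2 i)) (block q m1 m2 u' (Fin.cast hn2 i)) := by
          intro i hne
          have h1 := hmem i
          have h2 := hmem' i
          have hbne : block q m1 m2 u (Fin.cast hn2 i) ≠ block q m1 m2 u' (Fin.cast hn2 i) := by
            intro h
            exact Set.disjoint_left.mp (hAsubdisj _ _ _ hne) (h ▸ h1) h2
          exact hAdist _ _ (hsub _ _ h1) _ (hsub _ _ h2) hbne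
        have hsum : hammingDist (block q m1 m2 u (Fin.cast hn2 i1)) (block q m1 m2 u' (Fin.cast hn2 i1))
            + hammingDist (block q m1 m2 u (Fin.cast hn2 i2)) (block q m1 m2 u' (Fin.cast hn2 i2))
            ≤ ∑ i : Fin (q ^ m2), hammingDist (block q m1 m2 u i) (block q m1 m2 u' i) := by
          refine le_trans ?_ (Finset.sum_le_sum_of_subset
            (Finset.subset_univ {Fin.cast hn2 i1, Fin.cast hn2 i2}))
          rw [Finset.sum_pair hx12]
        have d1 := hd i1 ha1
        have d2 := hd i2 ha2
        omega
    · have h3 := hBdist v hv v' hv' hvv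
      have hdv : hammingDist v v' = ∑ x : Fin (q^m2), if v x ≠ v' x then 1 else 0 := by
        simp [hammingDist, Finset.card_filter]
      calc 3 ≤ hammingDist v v' := h3
        _ = ∑ x : Fin (q^m2), if v x ≠ v' x then 1 else 0 := hdv
        _ ≤ ∑ x : Fin (q^m2), hammingDist (block q m1 m2 u x) (block q m1 m2 u' x) := by
            refine Finset.sum_le_sum fun x _ => ?_
            by_cases h : v x = v' x
            · simp [h]
            · simp only [ne_eq, h, not_false_eq_true, if_true]
              have hbne : block q m1 m2 u x ≠ block q m1 m2 u' x := by
                intro heq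
                exact Set.disjoint_left.mp (hAdisj _ _ h)
                  (hsub _ _ (fblock x)) (hsub _ _ (heq ▸ fblock' x))
              exact Nat.one_le_iff_ne_zero.mpr fun h0 => hbne (hammingDist_eq_zero.mp h0)
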